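/- Let g : ℝ × ℝᵏ → ℝ be continuously differentiable and let Y ⊆ ℝᵏ be a nonempty compact set. Define h(t) := inf_{y ∈ Y} g(t,y) and, for each t, the set Y(t) := {y ∈ Y : g(t,y) = h(t)}. Then h is locally Lipschitz on ℝ, and for every t ∈ ℝ its lower right Dini derivative satisfies D₊h(t) ≥ inf_{y ∈ Y(t)} ∂g/∂t(t,y). -/

import Mathlib

/-- The lower right Dini derivative: `liminf_{h → 0⁺} (f (t+h) - f t) / h`. -/
noncomputable def lowerDini (f : ℝ → ℝ) (t : ℝ) : ℝ :=
  Filter.liminf (fun h => (f (t + h) - f t) / h) (nhdsWithin 0 (Set.Ioi 0))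

theorem stmt4 (k : ℕ) (g : ℝ × EuclideanSpace ℝ (Fin k) → ℝ) (hg : ContDiff ℝ 1 g)
    (Y : Set (EuclideanSpace ℝ (Fin k))) (hY : IsCompact Y) (hYne : Y.Nonempty)
    (h : ℝ → ℝ) (hh : ∀ t, h t = sInf ((fun y => g (t, y)) '' Y)) :
    LocallyLipschitz h ∧
      ∀ t : ℝ, sInf ((fun y => deriv (fun s => g (s, y)) t) '' {y ∈ Y | g (t, y) = h t})
        ≤ lowerDini h t := by
  classical

  set φ : ℝ × EuclideanSpace ℝ (Fin k) → ℝ := fun p => fderiv ℝ g p (1, 0) with hφdef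
  have hgc : Continuous g := hg.continuous
  have hφc : Continuous φ := (hg.continuous_fderiv one_ne_zero).clm_apply continuous_const
  have hder : ∀ (τ : ℝ) (y : EuclideanSpace ℝ (Fin k)), HasDerivAt (fun s => g (s, y)) (φ (τ, y)) τ := by
    intro τ y
    have h1 : HasDerivAt (fun s : ℝ => (s, y)) ((1 : ℝ), (0 : EuclideanSpace ℝ (Fin k))) τ :=
      (hasDerivAt_id τ).prodMk (hasDerivAt_const τ y)
    exact (hg.differentiable one_ne_zero (τ, y)).hasFDerivAt.comp_hasDerivAt τ h1
  have hMVT : ∀ (y : EuclideanSpace ℝ (Fin k)) (a b : ℝ), a < b →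
      ∃ ξ ∈ Set.Ioo a b, g (b, y) - g (a, y) = (b - a) * φ (ξ, y) := by
    intro y a b hab
    obtain ⟨c, hc, hceq⟩ := exists_hasDerivAt_eq_slope (fun s => g (s, y)) (fun s => φ (s, y)) hab
      ((hgc.comp (continuous_id.prodMk continuous_const)).continuousOn)
      (fun x _ => hder x y)
    refine ⟨c, hc, ?_⟩
    rw [eq_div_iff (by linarith : b - a ≠ 0)] at hceq
    linarith [hceq]
  -- minimizers exist
  have hmin : ∀ t : ℝ, ∃ y ∈ Y, h t = g (t, y) ∧ ∀ y' ∈ Y, g (t, y) ≤ g (t, y') := by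
    intro t
    obtain ⟨y, hyY, hymin⟩ := hY.exists_isMinOn hYne ((hgc.comp (Continuous.prodMk_right t)).continuousOn)
    refine ⟨y, hyY, ?_, fun y' hy' => hymin hy'⟩
    rw [hh]
    apply le_antisymm
    · exact csInf_le ⟨g (t, y), by rintro _ ⟨y', hy', rfl⟩; exact hymin hy'⟩ ⟨y, hyY, rfl⟩
    · exact le_csInf (hYne.image _) (by rintro _ ⟨y', hy', rfl⟩; exact hymin hy')
  have hle : ∀ (τ : ℝ), ∀ y' ∈ Y, h τ ≤ g (τ, y') := by
    intro τ y' hy'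
    obtain ⟨y, hyY, hyeq, hymin⟩ := hmin τ
    rw [hyeq]; exact hymin y' hy'
  -- uniform bound on φ over compact time interval × Y
  have hbound : ∀ a b : ℝ, a ≤ b → ∃ L : ℝ, 0 ≤ L ∧
      ∀ τ ∈ Set.Icc a b, ∀ y ∈ Y, |φ (τ, y)| ≤ L := by
    intro a b hab
    have hK : IsCompact ((Set.Icc a b) ×ˢ Y) := isCompact_Icc.prod hY
    have hne : ((Set.Icc a b) ×ˢ Y).Nonempty :=
      ⟨(a, hYne.choose), Set.mk_mem_prod ⟨le_refl a, hab⟩ hYne.choose_spec⟩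
    obtain ⟨p, hp, hpmax⟩ := hK.exists_isMaxOn hne ((continuous_abs.comp hφc).continuousOn)
    exact ⟨|φ p|, abs_nonneg _, fun τ hτ y hy => hpmax (Set.mk_mem_prod hτ hy)⟩
  -- Lipschitz bound for slices of g
  have hgLip : ∀ (L a b : ℝ), (∀ τ ∈ Set.Icc a b, ∀ y ∈ Y, |φ (τ, y)| ≤ L) →
      ∀ y ∈ Y, ∀ t₁ ∈ Set.Icc a b, ∀ t₂ ∈ Set.Icc a b,
        |g (t₂, y) - g (t₁, y)| ≤ L * |t₂ - t₁| := by
    intro L a b hL y hy t₁ ht₁ t₂ ht₂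
    have main : ∀ s₁ ∈ Set.Icc a b, ∀ s₂ ∈ Set.Icc a b, s₁ < s₂ →
        |g (s₂, y) - g (s₁, y)| ≤ L * |s₂ - s₁| := by
      intro s₁ hs₁ s₂ hs₂ hlt
      obtain ⟨ξ, hξ, hξeq⟩ := hMVT y s₁ s₂ hlt
      have hξmem : ξ ∈ Set.Icc a b :=
        ⟨le_trans hs₁.1 (le_of_lt hξ.1), le_trans (le_of_lt hξ.2) hs₂.2⟩
      rw [hξeq, abs_mul, mul_comm]
      gcongr
      exact hL ξ hξmem y hy
    rcases lt_trichotomy t₁ t₂ with hlt | heq | hgt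
    · exact main t₁ ht₁ t₂ ht₂ hlt
    · subst heq; simp
    · rw [abs_sub_comm, abs_sub_comm t₂ t₁]
      exact main t₂ ht₂ t₁ ht₁ hgt
  -- Lipschitz bound for h
  have hhLip : ∀ (L a b : ℝ), (∀ τ ∈ Set.Icc a b, ∀ y ∈ Y, |φ (τ, y)| ≤ L) →
      ∀ t₁ ∈ Set.Icc a b, ∀ t₂ ∈ Set.Icc a b, |h t₂ - h t₁| ≤ L * |t₂ - t₁| := by
    intro L a b hL t₁ ht₁ t₂ ht₂
    obtain ⟨y₁, hy₁Y, hy₁, hy₁min⟩ := hmin t₁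
    obtain ⟨y₂, hy₂Y, hy₂, hy₂min⟩ := hmin t₂
    have e1 : h t₂ - h t₁ ≤ g (t₂, y₁) - g (t₁, y₁) := by
      have := hle t₂ y₁ hy₁Y; rw [hy₁]; linarith
    have e2 : h t₁ - h t₂ ≤ g (t₁, y₂) - g (t₂, y₂) := by
      have := hle t₁ y₂ hy₂Y; rw [hy₂]; linarith
    have b1 := hgLip L a b hL y₁ hy₁Y t₁ ht₁ t₂ ht₂
    have b2 := hgLip L a b hL y₂ hy₂Y t₁ ht₁ t₂ ht₂
    rw [abs_sub_le_iff]
    constructor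
    · linarith [le_abs_self (g (t₂, y₁) - g (t₁, y₁))]
    · have := le_abs_self (g (t₁, y₂) - g (t₂, y₂))
      rw [abs_sub_comm] at this
      linarith
  constructor
  · -- locally Lipschitz
    intro x
    obtain ⟨L, hL0, hL⟩ := hbound (x - 1) (x + 1) (by linarith)
    refine ⟨L.toNNReal, Set.Icc (x - 1) (x + 1), Icc_mem_nhds (by linarith) (by linarith), ?_⟩
    apply LipschitzOnWith.of_dist_le_mul
    intro t₁ ht₁ t₂ ht₂
    rw [Real.dist_eq, Real.dist_eq]
    calc |h t₁ - h t₂| ≤ L * |t₁ - t₂| := hhLip L _ _ hL t₂ ht₂ t₁ ht₁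
      _ ≤ (L.toNNReal : ℝ) * |t₁ - t₂| := by gcongr; exact Real.le_coe_toNNReal L
  · -- Dini derivative bound
    intro t
    set M : Set (EuclideanSpace ℝ (Fin k)) := {y ∈ Y | g (t, y) = h t} with hMdef
    have hMsub : M ⊆ Y := fun y hy => hy.1
    have hMclosed : IsClosed M := by
      have : M = Y ∩ {y : EuclideanSpace ℝ (Fin k) | g (t, y) = h t} := rfl
      rw [this]
      exact hY.isClosed.inter (isClosed_eq (hgc.comp (Continuous.prodMk_right t)) continuous_const)
    have hMc : IsCompact M := hY.of_isClosed_subset hMclosed hMsub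
    have hMne : M.Nonempty := by
      obtain ⟨y, hyY, hyeq, _⟩ := hmin t
      exact ⟨y, hyY, hyeq.symm⟩
    have himg : (fun y => deriv (fun s => g (s, y)) t) '' M = (fun y => φ (t, y)) '' M := by
      apply Set.image_congr
      intro y _
      exact (hder t y).deriv
    rw [himg]
    set I := sInf ((fun y => φ (t, y)) '' M) with hIdef
    have hφtc : Continuous fun y : EuclideanSpace ℝ (Fin k) => φ (t, y) := hφc.comp (Continuous.prodMk_right t)
    have hIle : ∀ y ∈ M, I ≤ φ (t, y) := by
      intro y hy
      exact csInf_le (hMc.image hφtc).bddBelow ⟨y, hy, rfl⟩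
    obtain ⟨L, hL0, hL⟩ := hbound (t - 1) (t + 1) (by linarith)
    have hIoo1 : Set.Ioo (0:ℝ) 1 ∈ nhdsWithin (0:ℝ) (Set.Ioi 0) :=
      Ioo_mem_nhdsGT_of_mem ⟨le_refl 0, zero_lt_one⟩
    -- upper bound on the ratio, for coboundedness
    have hub : ∀ᶠ s in nhdsWithin (0:ℝ) (Set.Ioi 0), (h (t + s) - h t) / s ≤ L := by
      filter_upwards [hIoo1] with s hs
      obtain ⟨y₀, hy₀Y, hy₀, _⟩ := hmin t
      have h1 : h (t + s) ≤ g (t + s, y₀) := hle (t + s) y₀ hy₀Y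
      have h2 : |g (t + s, y₀) - g (t, y₀)| ≤ L * |t + s - t| :=
        hgLip L (t - 1) (t + 1) hL y₀ hy₀Y t ⟨by linarith, by linarith⟩ (t + s)
          ⟨by linarith [hs.1], by linarith [hs.2]⟩
      have h3 : |t + s - t| = s := by rw [add_sub_cancel_left, abs_of_pos hs.1]
      rw [h3] at h2
      rw [div_le_iff₀ hs.1]
      have := le_abs_self (g (t + s, y₀) - g (t, y₀))
      rw [hy₀]
      linarith
    have hcobdd : Filter.IsCoboundedUnder (· ≥ ·) (nhdsWithin (0:ℝ) (Set.Ioi 0))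
        (fun s => (h (t + s) - h t) / s) :=
      Filter.IsBoundedUnder.isCoboundedUnder_ge ⟨L, hub⟩
    -- key estimate
    have key : ∀ ε : ℝ, 0 < ε → ∃ δ > 0, ∀ s : ℝ, 0 < s → s < δ →
        I - ε ≤ (h (t + s) - h t) / s := by
      intro ε hε
      set V := {p : ℝ × (EuclideanSpace ℝ (Fin k)) | I - ε < φ p} with hVdef
      have hVopen : IsOpen V := isOpen_lt continuous_const hφc
      have hsub : ({t} : Set ℝ) ×ˢ M ⊆ V := by
        rintro ⟨τ, y⟩ ⟨hτ, hy⟩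
        simp only [Set.mem_singleton_iff] at hτ
        subst hτ
        have := hIle y hy
        simp only [hVdef, Set.mem_setOf_eq]
        linarith
      obtain ⟨u, v, hu, hv, htu, hMv, huv⟩ :=
        generalized_tube_lemma isCompact_singleton hMc hVopen hsub
      have htmem : t ∈ u := htu rfl
      obtain ⟨r, hr, hball⟩ := Metric.isOpen_iff.mp hu t htmem
      have hδ₁sub : Set.Icc t (t + r / 2) ⊆ u := by
        intro x hx
        apply hball
        rw [Metric.mem_ball, Real.dist_eq, abs_of_nonneg (by linarith [hx.1])]
        linarith [hx.2]
      -- localization of minimizers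
      have hloc : ∃ δ₂ > 0, ∀ s : ℝ, 0 < s → s < δ₂ → ∀ y ∈ Y,
          h (t + s) = g (t + s, y) → y ∈ v := by
        rcases (Y \ v).eq_empty_or_nonempty with hKe | hKne
        · exact ⟨1, zero_lt_one, fun s _ _ y hy _ => by
            by_contra hyv
            exact absurd (Set.mem_diff_of_mem hy hyv) (by rw [hKe]; exact Set.notMem_empty y)⟩
        · have hKc : IsCompact (Y \ v) := hY.diff hv
          obtain ⟨yK, hyK, hyKmin⟩ := hKc.exists_isMinOn hKne
            ((hgc.comp (Continuous.prodMk_right t)).continuousOn)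
          have hyKY : yK ∈ Y := hyK.1
          have hm : h t < g (t, yK) := by
            rcases lt_or_eq_of_le (hle t yK hyKY) with hlt | heq
            · exact hlt
            · exact absurd (hMv ⟨hyKY, heq.symm⟩) hyK.2
          set η := (g (t, yK) - h t) / 3 with hηdef
          have hη : 0 < η := by simp only [hηdef]; linarith
          refine ⟨min 1 (η / (L + 1)), lt_min zero_lt_one (by positivity), ?_⟩
          intro s hs hsδ y hy heq
          by_contra hyv
          have hyK' : y ∈ Y \ v := ⟨hy, hyv⟩
          have hge : g (t, yK) ≤ g (t, y) := hyKmin hyK'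
          have hs1 : s < 1 := lt_of_lt_of_le hsδ (min_le_left _ _)
          have hs2 : s < η / (L + 1) := lt_of_lt_of_le hsδ (min_le_right _ _)
          have hsL : L * s < η := by
            have h4 : s * (L + 1) < η := (lt_div_iff₀ (by linarith)).mp hs2
            nlinarith
          have hlip : ∀ y' ∈ Y, |g (t + s, y') - g (t, y')| ≤ L * s := by
            intro y' hy'
            have := hgLip L (t - 1) (t + 1) hL y' hy' t ⟨by linarith, by linarith⟩ (t + s)
              ⟨by linarith, by linarith⟩
            rwa [add_sub_cancel_left, abs_of_pos hs] at this
          obtain ⟨y₀, hy₀Y, hy₀, _⟩ := hmin t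
          have e1 : h (t + s) ≤ g (t, y₀) + L * s := by
            have := hle (t + s) y₀ hy₀Y
            have := hlip y₀ hy₀Y
            have := le_abs_self (g (t + s, y₀) - g (t, y₀))
            linarith
          have e2 : g (t, y) - L * s ≤ g (t + s, y) := by
            have := hlip y hy
            have := neg_abs_le (g (t + s, y) - g (t, y))
            linarith
          have : g (t, yK) = h t + 3 * η := by simp only [hηdef]; ring
          rw [← hy₀] at e1
          rw [heq] at e1
          linarith
      obtain ⟨δ₂, hδ₂, hδ₂loc⟩ := hloc
      refine ⟨min (r / 2) δ₂, lt_min (by linarith) hδ₂, ?_⟩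
      intro s hs hsδ
      have hsr : s < r / 2 := lt_of_lt_of_le hsδ (min_le_left _ _)
      have hsδ₂ : s < δ₂ := lt_of_lt_of_le hsδ (min_le_right _ _)
      obtain ⟨ys, hysY, hys, _⟩ := hmin (t + s)
      have hysv : ys ∈ v := hδ₂loc s hs hsδ₂ ys hysY hys
      obtain ⟨ξ, hξ, hξeq⟩ := hMVT ys t (t + s) (by linarith)
      have hξu : ξ ∈ u := hδ₁sub ⟨le_of_lt hξ.1, by linarith [hξ.2]⟩
      have hξV : (ξ, ys) ∈ V := huv (Set.mk_mem_prod hξu hysv)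
      have hφξ : I - ε < φ (ξ, ys) := hξV
      have hlow : h (t + s) - h t ≥ s * (I - ε) := by
        have h1 : h t ≤ g (t, ys) := hle t ys hysY
        have h2 : g (t + s, ys) - g (t, ys) = s * φ (ξ, ys) := by
          rw [hξeq]; ring_nf
        have h3 : s * (I - ε) ≤ s * φ (ξ, ys) := by
          apply mul_le_mul_of_nonneg_left (le_of_lt hφξ) (le_of_lt hs)
        rw [hys]
        linarith
      rw [le_div_iff₀ hs]
      linarith [hlow]
    -- conclude
    have hfinal : ∀ ε : ℝ, 0 < ε → I - ε ≤ lowerDini h t := by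
      intro ε hε
      obtain ⟨δ, hδ, hkey⟩ := key ε hε
      rw [lowerDini]
      apply Filter.le_liminf_of_le hcobdd
      filter_upwards [Ioo_mem_nhdsGT_of_mem ⟨le_refl (0:ℝ), hδ⟩] with s hs
      exact hkey s hs.1 hs.2
    by_contra hcon
    push_neg at hcon
    have := hfinal ((I - lowerDini h t) / 2) (by linarith)
    linarith
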